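/- Let S1, S2 be finite subsets of a finite set Ω with |S1| = f1, |S2| = f2, |S1 ∩ S2| = a, and S1 ∪ S2 nonempty. If π is a uniformly random permutation of Ω and z1 = min(π(S1)), z2 = min(π(S2)), then Pr(z1 = z2) = a / (f1 + f2 - a). -/

import Mathlib

open Finset

namespace MinwiseAux

variable {Ω : Type*} [Fintype Ω] [LinearOrder Ω] [DecidableEq Ω]

def argmin (U : Finset Ω) (hU : U.Nonempty) (π : Equiv.Perm Ω) : Ω :=
  π.symm ((U.image π).min' (hU.image π))

lemma apply_argmin (U : Finset Ω) (hU : U.Nonempty) (π : Equiv.Perm Ω) :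
    π (argmin U hU π) = (U.image π).min' (hU.image π) := by simp [argmin]

lemma argmin_mem (U : Finset Ω) (hU : U.Nonempty) (π : Equiv.Perm Ω) :
    argmin U hU π ∈ U := by
  obtain ⟨x, hx, hxe⟩ := Finset.mem_image.mp (Finset.min'_mem (U.image π) (hU.image π))
  have : argmin U hU π = x := π.injective (by rw [apply_argmin, hxe])
  rwa [this]

lemma argmin_le (U : Finset Ω) (hU : U.Nonempty) (π : Equiv.Perm Ω) {y : Ω} (hy : y ∈ U) :
    π (argmin U hU π) ≤ π y := by
  rw [apply_argmin]; exact Finset.min'_le _ _ (Finset.mem_image_of_mem π hy)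

lemma argmin_eq (U : Finset Ω) (hU : U.Nonempty) (π : Equiv.Perm Ω) {x : Ω}
    (hx : x ∈ U) (h : ∀ y ∈ U, π x ≤ π y) : argmin U hU π = x :=
  π.injective (le_antisymm (argmin_le U hU π hx) (h _ (argmin_mem U hU π)))

lemma argmin_mul_swap (U : Finset Ω) (hU : U.Nonempty) (π : Equiv.Perm Ω) {x y : Ω}
    (hx : x ∈ U) (hy : y ∈ U) :
    argmin U hU (π * Equiv.swap x y) = Equiv.swap x y (argmin U hU π) := by
  apply argmin_eq
  · rcases Equiv.swap_apply_def x y (argmin U hU π) with _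
    by_cases h1 : argmin U hU π = x
    · simp [h1, Equiv.swap_apply_left, hy]
    · by_cases h2 : argmin U hU π = y
      · simp [h2, Equiv.swap_apply_right, hx]
      · rw [Equiv.swap_apply_of_ne_of_ne h1 h2]; exact argmin_mem U hU π
  · intro z hz
    have : (π * Equiv.swap x y) (Equiv.swap x y (argmin U hU π)) = π (argmin U hU π) := by
      simp [Equiv.Perm.mul_apply]
    rw [this]
    apply argmin_le U hU π
    by_cases h1 : z = x
    · simpa [h1, Equiv.swap_apply_left] using hy
    · by_cases h2 : z = y
      · simpa [h2, Equiv.swap_apply_right] using hx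
      · simpa [Equiv.swap_apply_of_ne_of_ne h1 h2] using hz

lemma fiber_card_eq (U : Finset Ω) (hU : U.Nonempty) {x y : Ω} (hx : x ∈ U) (hy : y ∈ U) :
    (univ.filter (fun π : Equiv.Perm Ω => argmin U hU π = x)).card
      = (univ.filter (fun π : Equiv.Perm Ω => argmin U hU π = y)).card := by
  apply Finset.card_bij' (fun π _ => π * Equiv.swap x y) (fun π _ => π * Equiv.swap x y)
  · intro π hπ
    simp only [mem_filter, mem_univ, true_and] at hπ ⊢
    rw [argmin_mul_swap U hU π hx hy, hπ, Equiv.swap_apply_left]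
  · intro π hπ
    simp only [mem_filter, mem_univ, true_and] at hπ ⊢
    rw [argmin_mul_swap U hU π hx hy, hπ, Equiv.swap_apply_right]
  · intro π _; simp [mul_assoc]
  · intro π _; simp [mul_assoc]

lemma key (S1 S2 : Finset Ω) (hU : (S1 ∪ S2).Nonempty) (π : Equiv.Perm Ω) :
    (S1.image π).min = (S2.image π).min ↔ argmin (S1 ∪ S2) hU π ∈ S1 ∩ S2 := by
  set x := argmin (S1 ∪ S2) hU π with hxdef
  constructor
  · intro h
    have h1 : S1.Nonempty := by
      by_contra h1
      rw [not_nonempty_iff_eq_empty] at h1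
      have h2 : (S2.image π).min = ⊤ := by rw [← h, h1]; simp
      rw [Finset.min_eq_top, Finset.image_eq_empty] at h2
      rw [h1, h2] at hU; simp at hU
    have h2 : S2.Nonempty := by
      by_contra h2
      rw [not_nonempty_iff_eq_empty] at h2
      have h1' : (S1.image π).min = ⊤ := by rw [h, h2]; simp
      rw [Finset.min_eq_top, Finset.image_eq_empty] at h1'
      rw [h1', h2] at hU; simp at hU
    rw [← Finset.coe_min' (h1.image π), ← Finset.coe_min' (h2.image π)] at h
    have hmm : (S1.image π).min' (h1.image π) = (S2.image π).min' (h2.image π) :=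
      WithTop.coe_injective h
    -- π x ≤ both minima, and x ∈ S1 or S2
    have hxU : x ∈ S1 ∪ S2 := argmin_mem _ hU π
    have hle1 : π x ≤ (S1.image π).min' (h1.image π) := by
      obtain ⟨w, hw, hwe⟩ := Finset.mem_image.mp (Finset.min'_mem (S1.image π) (h1.image π))
      rw [← hwe]; exact argmin_le _ hU π (Finset.mem_union_left _ hw)
    rcases Finset.mem_union.mp hxU with hx1 | hx2
    · have hge : (S1.image π).min' (h1.image π) ≤ π x :=
        Finset.min'_le _ _ (Finset.mem_image_of_mem π hx1)
      have heq : π x = (S2.image π).min' (h2.image π) := by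
        rw [← hmm]; exact le_antisymm hle1 hge
      obtain ⟨w, hw, hwe⟩ := Finset.mem_image.mp (Finset.min'_mem (S2.image π) (h2.image π))
      have : x = w := π.injective (by rw [heq, hwe])
      exact Finset.mem_inter.mpr ⟨hx1, this ▸ hw⟩
    · have hge : (S2.image π).min' (h2.image π) ≤ π x :=
        Finset.min'_le _ _ (Finset.mem_image_of_mem π hx2)
      have heq : π x = (S1.image π).min' (h1.image π) := by
        rw [hmm]; exact le_antisymm (hmm ▸ hle1) hge
      obtain ⟨w, hw, hwe⟩ := Finset.mem_image.mp (Finset.min'_mem (S1.image π) (h1.image π))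
      have : x = w := π.injective (by rw [heq, hwe])
      exact Finset.mem_inter.mpr ⟨this ▸ hw, hx2⟩
  · intro hx
    rcases Finset.mem_inter.mp hx with ⟨hx1, hx2⟩
    have h1 : S1.Nonempty := ⟨x, hx1⟩
    have h2 : S2.Nonempty := ⟨x, hx2⟩
    have e1 : (S1.image π).min' (h1.image π) = π x := by
      apply le_antisymm (Finset.min'_le _ _ (Finset.mem_image_of_mem π hx1))
      obtain ⟨w, hw, hwe⟩ := Finset.mem_image.mp (Finset.min'_mem (S1.image π) (h1.image π))
      rw [← hwe]; exact argmin_le _ hU π (Finset.mem_union_left _ hw)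
    have e2 : (S2.image π).min' (h2.image π) = π x := by
      apply le_antisymm (Finset.min'_le _ _ (Finset.mem_image_of_mem π hx2))
      obtain ⟨w, hw, hwe⟩ := Finset.mem_image.mp (Finset.min'_mem (S2.image π) (h2.image π))
      rw [← hwe]; exact argmin_le _ hU π (Finset.mem_union_right _ hw)
    rw [← Finset.coe_min' (h1.image π), ← Finset.coe_min' (h2.image π), e1, e2]

end MinwiseAux

open MinwiseAux in
theorem minwise_collision_prob {Ω : Type*} [Fintype Ω] [LinearOrder Ω] [DecidableEq Ω]
    (S1 S2 : Finset Ω) (f1 f2 a : ℕ)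
    (hf1 : S1.card = f1) (hf2 : S2.card = f2) (ha : (S1 ∩ S2).card = a)
    (hne : (S1 ∪ S2).Nonempty) :
    ((Finset.univ.filter
        (fun π : Equiv.Perm Ω => (S1.image π).min = (S2.image π).min)).card : ℝ)
      / (Fintype.card (Equiv.Perm Ω) : ℝ)
      = (a : ℝ) / ((f1 : ℝ) + (f2 : ℝ) - (a : ℝ)) := by
  classical
  set U := S1 ∪ S2 with hUdef
  set A := S1 ∩ S2 with hAdef
  obtain ⟨x₀, hx₀⟩ := id hne
  set c := (univ.filter (fun π : Equiv.Perm Ω => argmin U hne π = x₀)).card with hc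
  -- rewrite the filter via the key lemma
  have hfilt : (univ.filter
      (fun π : Equiv.Perm Ω => (S1.image π).min = (S2.image π).min))
      = univ.filter (fun π : Equiv.Perm Ω => argmin U hne π ∈ A) := by
    apply Finset.filter_congr
    intro π _
    exact key S1 S2 hne π
  -- fiberwise counts
  have hsumU : Fintype.card (Equiv.Perm Ω) = ∑ x ∈ U, (univ.filter
      (fun π : Equiv.Perm Ω => argmin U hne π = x)).card := by
    rw [← Finset.card_univ]
    exact Finset.card_eq_sum_card_fiberwise (fun π _ => argmin_mem U hne π)
  have hsumA : (univ.filter (fun π : Equiv.Perm Ω => argmin U hne π ∈ A)).card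
      = ∑ x ∈ A, (univ.filter (fun π : Equiv.Perm Ω => argmin U hne π = x)).card := by
    rw [Finset.card_eq_sum_card_fiberwise
      (f := fun π => argmin U hne π) (t := A)
      (s := univ.filter (fun π : Equiv.Perm Ω => argmin U hne π ∈ A))
      (fun π hπ => (Finset.mem_filter.mp hπ).2)]
    apply Finset.sum_congr rfl
    intro x hx
    rw [Finset.filter_filter]
    congr 1
    ext π
    simp only [Finset.mem_filter, Finset.mem_univ, true_and]
    constructor
    · rintro ⟨_, h⟩; exact h
    · intro h; exact ⟨h ▸ hx, h⟩
  have hconst : ∀ x ∈ U, (univ.filter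
      (fun π : Equiv.Perm Ω => argmin U hne π = x)).card = c := by
    intro x hx
    exact fiber_card_eq U hne hx hx₀
  have hsumU' : Fintype.card (Equiv.Perm Ω) = U.card * c := by
    rw [hsumU, Finset.sum_congr rfl hconst, Finset.sum_const, smul_eq_mul]
  have hsumA' : (univ.filter (fun π : Equiv.Perm Ω => argmin U hne π ∈ A)).card
      = A.card * c := by
    rw [hsumA, Finset.sum_congr rfl (fun x hx => hconst x (Finset.mem_of_subset
      (Finset.inter_subset_union) hx)), Finset.sum_const, smul_eq_mul]
  have hcpos : 0 < c := by
    rcases Nat.eq_zero_or_pos c with h | h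
    · rw [h, mul_zero] at hsumU'
      exact absurd hsumU' Fintype.card_ne_zero
    · exact h
  have hUpos : 0 < U.card := Finset.card_pos.mpr hne
  -- cardinality identity: U.card + A.card = f1 + f2
  have hcard : U.card + a = f1 + f2 := by
    rw [← hf1, ← hf2, ← ha]
    exact Finset.card_union_add_card_inter S1 S2
  have hUcast : (U.card : ℝ) = (f1 : ℝ) + (f2 : ℝ) - (a : ℝ) := by
    have : (U.card : ℝ) + a = f1 + f2 := by exact_mod_cast hcard
    linarith
  rw [hfilt, hsumA', hsumU', ha, ← hUcast]
  push_cast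
  rw [mul_div_mul_right _ _ (by exact_mod_cast hcpos.ne' : (c : ℝ) ≠ 0)]
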